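/- Partition of weight set: with p odd, f ≥ 1, e' ≥ 1, b_i generic (e' ≤ b_i + e' ≤ p-1-e'), let W be the set of weights μ(J,d) over all admissible (J,d), and for a ∈ A = {0,...,e'}^f let W_a be the set of μ(J,d) whose associated a (via a_i = d_i+1 if i∈J,i+1∉J; d_i-1 if i∉J,i+1∈J; d_i otherwise) equals a. Then W is the disjoint union of the W_a for a ∈ A, and |W_a| = 2^{f - δ_a} where δ_a = #{i : a_i ∈ {0, e'}}. -/
import Mathlib


/-- Partition of the weight set: each admissible pair `(J,d)` yields a tuple
`a ∈ {0,…,e'}^f` (well-definedness), and for each `a` the fiber of admissible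
pairs over `a` has cardinality `2^(f - δ_a)`. -/
theorem stmt_15 (p f e' : ℕ) [NeZero f] (hp : p.Prime) (hodd : Odd p)
    (hf : 1 ≤ f) (he' : 1 ≤ e')
    (b : ZMod f → ℤ)
    (hb : ∀ i, (e' : ℤ) ≤ b i + e' ∧ b i + e' ≤ (p : ℤ) - 1 - e') :
    (∀ (J : Finset (ZMod f)) (d : ZMod f → ℤ),
      (∀ i, if i ∈ J then 0 ≤ d i ∧ d i ≤ (e' : ℤ) - 1 else 1 ≤ d i ∧ d i ≤ (e' : ℤ)) →
      ∀ i, 0 ≤ (if i ∈ J ∧ i + 1 ∉ J then d i + 1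
          else if i ∉ J ∧ i + 1 ∈ J then d i - 1 else d i) ∧
        (if i ∈ J ∧ i + 1 ∉ J then d i + 1
          else if i ∉ J ∧ i + 1 ∈ J then d i - 1 else d i) ≤ (e' : ℤ)) ∧
    (∀ a : ZMod f → ℤ, (∀ i, 0 ≤ a i ∧ a i ≤ (e' : ℤ)) →
      Nat.card {Jd : Finset (ZMod f) × (ZMod f → ℤ) //
        (∀ i, if i ∈ Jd.1 then 0 ≤ Jd.2 i ∧ Jd.2 i ≤ (e' : ℤ) - 1
          else 1 ≤ Jd.2 i ∧ Jd.2 i ≤ (e' : ℤ)) ∧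
        (∀ i, a i = if i ∈ Jd.1 ∧ i + 1 ∉ Jd.1 then Jd.2 i + 1
          else if i ∉ Jd.1 ∧ i + 1 ∈ Jd.1 then Jd.2 i - 1 else Jd.2 i)} =
      2 ^ (f - (Finset.univ.filter (fun i : ZMod f => a i = 0 ∨ a i = (e' : ℤ))).card)) := by
  classical
  have he1 : (1 : ℤ) ≤ (e' : ℤ) := by exact_mod_cast he'
  constructor
  · intro J d hd i
    have h := hd i
    by_cases h1 : i ∈ J <;> by_cases h2 : i + 1 ∈ J <;>
      simp only [h1, h2, if_true, if_false, not_true_eq_false, not_false_eq_true,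
        true_and, false_and, and_true, and_false, if_pos, if_neg] at h ⊢ <;>
      omega
  · intro a ha
    set P : Finset (ZMod f) → Prop :=
      fun J => ∀ j : ZMod f, (a (j - 1) = 0 → j ∈ J) ∧ (a (j - 1) = (e' : ℤ) → j ∉ J)
      with hPdef
    have hcongr : Nat.card {Jd : Finset (ZMod f) × (ZMod f → ℤ) //
        (∀ i, if i ∈ Jd.1 then 0 ≤ Jd.2 i ∧ Jd.2 i ≤ (e' : ℤ) - 1
          else 1 ≤ Jd.2 i ∧ Jd.2 i ≤ (e' : ℤ)) ∧
        (∀ i, a i = if i ∈ Jd.1 ∧ i + 1 ∉ Jd.1 then Jd.2 i + 1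
          else if i ∉ Jd.1 ∧ i + 1 ∈ Jd.1 then Jd.2 i - 1 else Jd.2 i)} =
        Nat.card {J : Finset (ZMod f) // P J} := by
      apply Nat.card_congr
      refine
        { toFun := fun Jd => ⟨Jd.1.1, ?_⟩
          invFun := fun J => ⟨(J.1, fun i =>
              if i ∈ J.1 ∧ i + 1 ∉ J.1 then a i - 1
              else if i ∉ J.1 ∧ i + 1 ∈ J.1 then a i + 1 else a i), ?_, ?_⟩
          left_inv := ?_
          right_inv := ?_ }
      · -- forward: P holds
        obtain ⟨⟨J, d⟩, hd, hfa⟩ := Jd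
        intro j
        have hj : (j - 1) + 1 = j := sub_add_cancel j 1
        have h1 := hd (j - 1)
        have h2 := hfa (j - 1)
        rw [hj] at h2
        by_cases hm : j - 1 ∈ J <;> by_cases hn : j ∈ J <;>
          simp only [hm, hn, if_true, if_false, not_true_eq_false, not_false_eq_true,
            true_and, false_and, and_true, and_false, if_pos, if_neg,
            IsEmpty.forall_iff, forall_true_left, true_implies, implies_true,
            not_true, not_false_iff] at h1 h2 ⊢ <;>
          first
          | omega
          | (intro hcon; omega)
          | (constructor <;> intro hcon <;> omega)
      · -- bounds for invFun
        obtain ⟨J, hPJ⟩ := J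
        intro i
        have hP1 := (hPJ (i + 1)).1
        have hP2 := (hPJ (i + 1)).2
        rw [add_sub_cancel_right] at hP1 hP2
        have hai := ha i
        by_cases hm : i ∈ J <;> by_cases hn : i + 1 ∈ J
        · have hne : a i ≠ (e' : ℤ) := fun hh => hP2 hh hn
          simp only [hm, hn, if_true, not_true_eq_false, and_false, if_false, if_pos,
            false_and, if_neg, not_false_eq_true, true_and] ; omega
        · have hne : a i ≠ 0 := fun hh => hn (hP1 hh)
          simp only [hm, hn, if_true, not_false_eq_true, and_true, true_and, if_pos,
            false_and, if_neg, not_true_eq_false, and_false, if_false] ; omega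
        · have hne : a i ≠ (e' : ℤ) := fun hh => hP2 hh hn
          simp only [hm, hn, if_false, not_true_eq_false, and_false, false_and, if_neg,
            not_false_eq_true, true_and, and_true, if_pos] ; omega
        · have hne : a i ≠ 0 := fun hh => hn (hP1 hh)
          simp only [hm, hn, if_false, not_false_eq_true, and_true, false_and, if_neg,
            and_false, if_pos] ; omega
      · -- formula for invFun
        obtain ⟨J, hPJ⟩ := J
        intro i
        by_cases hm : i ∈ J <;> by_cases hn : i + 1 ∈ J <;>
          simp only [hm, hn, if_true, if_false, not_true_eq_false, not_false_eq_true,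
            true_and, false_and, and_true, and_false] <;> omega
      · -- left inverse
        rintro ⟨⟨J, d⟩, hd, hfa⟩
        apply Subtype.ext
        dsimp only
        rw [Prod.mk.injEq]
        refine ⟨rfl, funext fun i => ?_⟩
        have h2 := hfa i
        by_cases hm : i ∈ J <;> by_cases hn : i + 1 ∈ J <;>
          simp only [hm, hn, if_true, if_false, not_true_eq_false, not_false_eq_true,
            true_and, false_and, and_true, and_false] at h2 ⊢ <;> omega
      · -- right inverse
        rintro ⟨J, hPJ⟩
        rfl
    rw [hcongr]
    -- now count the J's satisfying P
    have hfin : Nat.card {J : Finset (ZMod f) // P J}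
        = (Finset.univ.filter P).card := by
      rw [Nat.card_eq_fintype_card, Fintype.card_subtype]
    rw [hfin]
    set T' : Finset (ZMod f) :=
      Finset.univ.filter (fun j => a (j - 1) = 0 ∨ a (j - 1) = (e' : ℤ)) with hT'def
    have hT'card : T'.card
        = (Finset.univ.filter (fun i : ZMod f => a i = 0 ∨ a i = (e' : ℤ))).card := by
      apply Finset.card_bij (fun j _ => j - 1)
      · intro j hj
        simp only [hT'def, Finset.mem_filter, Finset.mem_univ, true_and] at hj ⊢
        exact hj
      · intro j₁ h₁ j₂ h₂ h
        have := congrArg (· + 1) h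
        simpa [sub_add_cancel] using this
      · intro i hi
        refine ⟨i + 1, ?_, by rw [add_sub_cancel_right]⟩
        simp only [hT'def, Finset.mem_filter, Finset.mem_univ, true_and,
          add_sub_cancel_right] at hi ⊢
        exact hi
    rw [← hT'card]
    set C : Finset (ZMod f) := Finset.univ.filter (fun j => a (j - 1) = 0) with hCdef
    have hCT' : C ⊆ T' := by
      intro j hj
      simp only [hCdef, hT'def, Finset.mem_filter, Finset.mem_univ, true_and] at hj ⊢
      exact Or.inl hj
    have hbij : (Finset.univ.filter P).card = (T'ᶜ).powerset.card := by
      apply Finset.card_bij' (fun J _ => J \ T') (fun K _ => K ∪ C)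
      · intro J hJ
        rw [Finset.mem_powerset]
        intro j hj
        rw [Finset.mem_sdiff] at hj
        rw [Finset.mem_compl]
        exact hj.2
      · intro K hK
        rw [Finset.mem_powerset] at hK
        simp only [Finset.mem_filter, Finset.mem_univ, true_and, hPdef]
        intro j
        constructor
        · intro h0
          apply Finset.mem_union_right
          simp only [hCdef, Finset.mem_filter, Finset.mem_univ, true_and]
          exact h0
        · intro he
          rw [Finset.mem_union]
          rintro (hK' | hC)
          · have := hK hK'
            rw [Finset.mem_compl] at this
            apply this
            simp only [hT'def, Finset.mem_filter, Finset.mem_univ, true_and]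
            exact Or.inr he
          · simp only [hCdef, Finset.mem_filter, Finset.mem_univ, true_and] at hC
            rw [hC] at he
            omega
      · intro J hJ
        simp only [Finset.mem_filter, Finset.mem_univ, true_and, hPdef] at hJ
        ext j
        simp only [Finset.mem_union, Finset.mem_sdiff]
        by_cases ht : j ∈ T'
        · simp only [hT'def, Finset.mem_filter, Finset.mem_univ, true_and] at ht
          rcases ht with h0 | he
          · constructor
            · intro _; exact (hJ j).1 h0
            · intro _; right
              simp only [hCdef, Finset.mem_filter, Finset.mem_univ, true_and]
              exact h0
          · have hnj : j ∉ J := (hJ j).2 he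
            have hnC : j ∉ C := by
              simp only [hCdef, Finset.mem_filter, Finset.mem_univ, true_and]
              intro h0; rw [h0] at he; omega
            constructor
            · rintro (⟨hj, _⟩ | hC)
              · exact absurd hj hnj
              · exact absurd hC hnC
            · intro hj; exact absurd hj hnj
        · have hnC : j ∉ C := fun h => ht (hCT' h)
          constructor
          · rintro (⟨hj, _⟩ | hC)
            · exact hj
            · exact absurd hC hnC
          · intro hj; exact Or.inl ⟨hj, ht⟩
      · intro K hK
        rw [Finset.mem_powerset] at hK
        ext j
        simp only [Finset.mem_sdiff, Finset.mem_union]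
        constructor
        · rintro ⟨hK' | hC, ht⟩
          · exact hK'
          · exact absurd (hCT' hC) ht
        · intro hj
          refine ⟨Or.inl hj, ?_⟩
          have := hK hj
          rw [Finset.mem_compl] at this
          exact this
    rw [hbij, Finset.card_powerset, Finset.card_compl]
    congr 1
    rw [ZMod.card f]
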